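/- Let T be a finite tree on n vertices. Then k(T) = 2 if and only if T is a star K_{1,t} with t ≥ 2 leaves, or a balanced double star. -/

import Mathlib

/-- The status (transmission index) of a vertex: the sum of distances to all vertices. -/
noncomputable def SimpleGraph.status {V : Type*} [Fintype V] (G : SimpleGraph V) (v : V) : ℕ :=
  ∑ u : V, G.dist v u

/-- `k(G)`: the number of distinct status values among the vertices of `G`. -/
noncomputable def SimpleGraph.numStatusValues {V : Type*} [Fintype V] (G : SimpleGraph V) : ℕ :=
  (Finset.univ.image G.status).card

/-- `G` is a star `K_{1,t}` with `t ≥ 2` leaves: there is a center adjacent to every other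
vertex, these being the only edges, and there are at least two leaves. -/
def SimpleGraph.IsStarWithAtLeastTwoLeaves {V : Type*} [Fintype V] (G : SimpleGraph V) : Prop :=
  3 ≤ Fintype.card V ∧
    ∃ c : V, ∀ u v : V, G.Adj u v ↔ (u = c ∧ v ≠ c) ∨ (v = c ∧ u ≠ c)

/-- `G` is a balanced double star: two adjacent centers, each with `a ≥ 1` pendant
(degree-one) neighbors, and the same number of pendant neighbors on each center. -/
def SimpleGraph.IsBalancedDoubleStar {V : Type*} [Fintype V] (G : SimpleGraph V)
    [DecidableRel G.Adj] : Prop :=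
  ∃ c₁ c₂ : V, c₁ ≠ c₂ ∧ G.Adj c₁ c₂ ∧
    (∀ v : V, v ≠ c₁ → v ≠ c₂ →
      ((G.Adj c₁ v ∧ ¬ G.Adj c₂ v) ∨ (G.Adj c₂ v ∧ ¬ G.Adj c₁ v)) ∧ G.degree v = 1) ∧
    G.degree c₁ = G.degree c₂ ∧ 2 ≤ G.degree c₁


section Helpers

open Finset

variable {V : Type*} {G : SimpleGraph V}

lemma isPath_concat {u v w : V} {p : G.Walk u v} (hp : p.IsPath) (h : G.Adj v w)
    (hw : w ∉ p.support) : (p.concat h).IsPath := by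
  rw [SimpleGraph.Walk.isPath_def, SimpleGraph.Walk.support_concat]
  simp only [List.concat_eq_append, List.nodup_append, List.nodup_cons]
  refine ⟨hp.support_nodup, by simp, ?_⟩
  intro a ha b hb hab
  simp only [List.mem_singleton] at hb
  subst hb
  exact hw (hab ▸ ha)
lemma tree_path_length (hT : G.IsTree) {u v : V} {p : G.Walk u v} (hp : p.IsPath) :
    p.length = G.dist u v := by
  obtain ⟨q, hq, hql⟩ := hT.isConnected.exists_path_of_dist u v
  have := hT.IsAcyclic.path_unique ⟨p, hp⟩ ⟨q, hq⟩
  rw [← hql]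
  exact congrArg (fun r : G.Path u v => (r : G.Walk u v).length) this

/-- L1: adjacent vertices have distances (from any w) differing by exactly one. -/
lemma tree_step (hT : G.IsTree) {u v : V} (h : G.Adj u v) (w : V) :
    G.dist w v = G.dist w u + 1 ∨ G.dist w u = G.dist w v + 1 := by
  classical
  obtain ⟨p, hp, hlen⟩ := hT.isConnected.exists_path_of_dist w u
  by_cases hv : v ∈ p.support
  · right
    have htake : (p.takeUntil v hv).length = G.dist w v :=
      tree_path_length hT (hp.takeUntil hv)
    have hedge : (SimpleGraph.Walk.cons h.symm SimpleGraph.Walk.nil : G.Walk v u).IsPath := by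
      simp [SimpleGraph.Walk.isPath_def, h.ne']
    have hdrop : (p.dropUntil v hv).length = G.dist v u :=
      tree_path_length hT (hp.dropUntil hv)
    have hd1 : G.dist v u = 1 := by
      simpa using (tree_path_length hT hedge).symm
    have hsplit : (p.takeUntil v hv).length + (p.dropUntil v hv).length = p.length := by
      rw [← SimpleGraph.Walk.length_append, SimpleGraph.Walk.take_spec]
    omega
  · left
    have hpath : (p.concat h).IsPath := isPath_concat hp h hv
    have := tree_path_length hT hpath
    rw [SimpleGraph.Walk.length_concat] at this
    omega

/-- L3: monotonicity along a 2-edge geodesic. -/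
lemma tree_mono (hT : G.IsTree) {a b c : V} (hab : G.Adj a b) (hbc : G.Adj b c)
    (hac : a ≠ c) {w : V} (hw : G.dist w b = G.dist w a + 1) :
    G.dist w c = G.dist w b + 1 := by
  classical
  rcases tree_step hT hbc w with h2 | h2
  · exact h2
  exfalso
  obtain ⟨p, hp, hlen⟩ := hT.isConnected.exists_path_of_dist w a
  have hbns : b ∉ p.support := by
    intro hb
    have h1 : G.dist w b ≤ (p.takeUntil b hb).length := SimpleGraph.dist_le _
    have h3 := SimpleGraph.Walk.length_takeUntil_le p hb
    omega
  have hcns : c ∉ p.support := by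
    intro hc
    have h1 : G.dist w c = (p.takeUntil c hc).length :=
      (tree_path_length hT (hp.takeUntil hc)).symm
    have h3 : (p.dropUntil c hc).length = G.dist c a :=
      tree_path_length hT (hp.dropUntil hc)
    have hsplit : (p.takeUntil c hc).length + (p.dropUntil c hc).length = p.length := by
      rw [← SimpleGraph.Walk.length_append, SimpleGraph.Walk.take_spec]
    have hca : G.dist c a ≠ 0 := by
      have := hT.isConnected.pos_dist_of_ne (Ne.symm hac)
      omega
    omega
  have hpath : ((p.concat hab).concat hbc).IsPath := by
    refine isPath_concat (isPath_concat hp hab hbns) hbc ?_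
    rw [SimpleGraph.Walk.support_concat]
    simp only [List.concat_eq_append, List.mem_append, List.mem_singleton]
    rintro (hc | rfl)
    · exact hcns hc
    · exact hbc.ne rfl
  have := tree_path_length hT hpath
  rw [SimpleGraph.Walk.length_concat, SimpleGraph.Walk.length_concat] at this
  omega

lemma exists_walk_to_getVert (p : G.Walk x y) (i : ℕ) :
    ∃ q : G.Walk x (p.getVert i), q.length ≤ i := by
  induction p generalizing i with
  | nil => exact ⟨SimpleGraph.Walk.nil, by simp⟩
  | cons h q ih =>
    cases i with
    | zero => exact ⟨SimpleGraph.Walk.nil, Nat.le_of_eq rfl⟩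
    | succ n =>
      obtain ⟨r, hr⟩ := ih n
      exact ⟨(SimpleGraph.Walk.cons h r).copy rfl (by rw [SimpleGraph.Walk.getVert_cons_succ]),
        by simpa using Nat.succ_le_succ hr⟩

lemma exists_walk_from_getVert (p : G.Walk x y) (i : ℕ) :
    ∃ q : G.Walk (p.getVert i) y, q.length ≤ p.length - i := by
  induction p generalizing i with
  | nil => exact ⟨SimpleGraph.Walk.nil, by simp⟩
  | cons h q ih =>
    cases i with
    | zero =>
      exact ⟨SimpleGraph.Walk.cons h q, Nat.le_of_eq rfl⟩
    | succ n =>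
      obtain ⟨r, hr⟩ := ih n
      refine ⟨r.copy (by rw [SimpleGraph.Walk.getVert_cons_succ]) rfl, ?_⟩
      rw [SimpleGraph.Walk.length_copy]
      refine hr.trans ?_
      simp only [SimpleGraph.Walk.length_cons]
      omega

lemma dist_getVert (hC : G.Connected) {x y : V} {p : G.Walk x y}
    (hlen : p.length = G.dist x y) {i : ℕ} (hi : i ≤ p.length) :
    G.dist x (p.getVert i) = i := by
  obtain ⟨q, hq⟩ := exists_walk_to_getVert p i
  obtain ⟨r, hr⟩ := exists_walk_from_getVert p i
  have h1 : G.dist x (p.getVert i) ≤ i := (SimpleGraph.dist_le q).trans hq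
  have h2 : G.dist (p.getVert i) y ≤ p.length - i := (SimpleGraph.dist_le r).trans hr
  have h3 := hC.dist_triangle (u := x) (v := p.getVert i) (w := y)
  omega

lemma status_edge [Fintype V] (hT : G.IsTree) {u v : V} (h : G.Adj u v) :
    G.status v + (Finset.univ.filter (fun w => ¬ (G.dist w v = G.dist w u + 1))).card
      = G.status u + (Finset.univ.filter (fun w => G.dist w v = G.dist w u + 1)).card := by
  classical
  have sv : G.status v = ∑ w : V, G.dist w v :=
    Finset.sum_congr rfl (fun w _ => SimpleGraph.dist_comm ..)
  have su : G.status u = ∑ w : V, G.dist w u :=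
    Finset.sum_congr rfl (fun w _ => SimpleGraph.dist_comm ..)
  rw [← Finset.sum_filter_add_sum_filter_not Finset.univ
    (fun w => G.dist w v = G.dist w u + 1)] at sv su
  have e1 : ∑ w ∈ Finset.univ.filter (fun w => G.dist w v = G.dist w u + 1), G.dist w v
      = (∑ w ∈ Finset.univ.filter (fun w => G.dist w v = G.dist w u + 1), G.dist w u)
        + (Finset.univ.filter (fun w => G.dist w v = G.dist w u + 1)).card := by
    rw [Finset.sum_congr rfl (fun w hw => (Finset.mem_filter.mp hw).2),
      Finset.sum_add_distrib, Finset.sum_const, smul_eq_mul, mul_one]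
  have e2 : ∑ w ∈ Finset.univ.filter (fun w => ¬ (G.dist w v = G.dist w u + 1)), G.dist w u
      = (∑ w ∈ Finset.univ.filter (fun w => ¬ (G.dist w v = G.dist w u + 1)), G.dist w v)
        + (Finset.univ.filter (fun w => ¬ (G.dist w v = G.dist w u + 1))).card := by
    have key : ∀ w ∈ Finset.univ.filter (fun w => ¬ (G.dist w v = G.dist w u + 1)),
        G.dist w u = G.dist w v + 1 := by
      intro w hw
      rcases tree_step hT h w with h1 | h1
      · exact absurd h1 (Finset.mem_filter.mp hw).2
      · exact h1
    rw [Finset.sum_congr rfl key, Finset.sum_add_distrib, Finset.sum_const, smul_eq_mul, mul_one]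
  omega

set_option maxHeartbeats 1000000 in
lemma diam_le_three [Fintype V] (hT : G.IsTree) {A B : ℕ} (hAB : A ≠ B)
    (hmem : ∀ v : V, G.status v = A ∨ G.status v = B) (x y : V) : G.dist x y ≤ 3 := by
  classical
  have hC := hT.isConnected
  by_contra hcon
  push_neg at hcon
  obtain ⟨p, hp, hlen⟩ := hC.exists_path_of_dist x y
  have hplen : 4 ≤ p.length := by omega
  have hd : ∀ i, i ≤ p.length → G.dist x (p.getVert i) = i := fun i hi => dist_getVert hC hlen hi
  have hne : ∀ i j, i ≤ p.length → j ≤ p.length → i ≠ j → p.getVert i ≠ p.getVert j := by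
    intro i j hi hj hij heq
    have h1 := hd i hi
    have h2 := hd j hj
    rw [heq] at h1
    omega
  have step2 : ∀ a b c : V, G.Adj a b → G.Adj b c → a ≠ c →
      (Finset.univ.filter (fun w => G.dist w b = G.dist w a + 1)).card
        < (Finset.univ.filter (fun w => G.dist w c = G.dist w b + 1)).card := by
    intro a b c hab hbc hac
    apply Finset.card_lt_card
    rw [Finset.ssubset_iff_of_subset]
    · refine ⟨b, Finset.mem_filter.mpr ⟨Finset.mem_univ _, ?_⟩, ?_⟩
      · rw [SimpleGraph.dist_self, SimpleGraph.dist_eq_one_iff_adj]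
        exact hbc
      · simp [SimpleGraph.dist_self]
    · intro w hw
      exact Finset.mem_filter.mpr ⟨Finset.mem_univ _,
        tree_mono hT hab hbc hac (Finset.mem_filter.mp hw).2⟩
  have a01 := p.adj_getVert_succ (show 0 < p.length by omega)
  have a12 := p.adj_getVert_succ (show 1 < p.length by omega)
  have a23 := p.adj_getVert_succ (show 2 < p.length by omega)
  have a34 := p.adj_getVert_succ (show 3 < p.length by omega)
  have l1 := step2 _ _ _ a01 a12 (hne 0 2 (by omega) (by omega) (by omega))
  have l2 := step2 _ _ _ a12 a23 (hne 1 3 (by omega) (by omega) (by omega))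
  have l3 := step2 _ _ _ a23 a34 (hne 2 4 (by omega) (by omega) (by omega))
  have e1 := status_edge hT a01
  have e2 := status_edge hT a12
  have e3 := status_edge hT a23
  have e4 := status_edge hT a34
  have n1 := Finset.card_filter_add_card_filter_not
    (s := Finset.univ) (p := fun w => G.dist w (p.getVert 1) = G.dist w (p.getVert 0) + 1)
  have n2 := Finset.card_filter_add_card_filter_not
    (s := Finset.univ) (p := fun w => G.dist w (p.getVert 2) = G.dist w (p.getVert 1) + 1)
  have n3 := Finset.card_filter_add_card_filter_not
    (s := Finset.univ) (p := fun w => G.dist w (p.getVert 3) = G.dist w (p.getVert 2) + 1)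
  have n4 := Finset.card_filter_add_card_filter_not
    (s := Finset.univ) (p := fun w => G.dist w (p.getVert 4) = G.dist w (p.getVert 3) + 1)
  simp only [Nat.reduceAdd] at l1 l2 l3 e1 e2 e3 e4
  have m0 := hmem (p.getVert 0)
  have m1 := hmem (p.getVert 1)
  have m2 := hmem (p.getVert 2)
  have m3 := hmem (p.getVert 3)
  have m4 := hmem (p.getVert 4)
  rcases m0 with h|h <;> rcases m1 with h1|h1 <;> rcases m2 with h2|h2 <;>
    rcases m3 with h3|h3 <;> rcases m4 with h4|h4 <;> omega

/-- distance along an explicit 2-path in a tree -/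
lemma dist_eq_two (hT : G.IsTree) {a b c : V} (h1 : G.Adj a b) (h2 : G.Adj b c)
    (hac : a ≠ c) : G.dist a c = 2 := by
  have hp : (SimpleGraph.Walk.cons h1 (SimpleGraph.Walk.cons h2 SimpleGraph.Walk.nil)).IsPath := by
    simp [SimpleGraph.Walk.isPath_def, h1.ne, h2.ne, hac]
  simpa using (tree_path_length hT hp).symm

lemma dist_eq_three (hT : G.IsTree) {a b c d : V} (h1 : G.Adj a b) (h2 : G.Adj b c)
    (h3 : G.Adj c d) (hac : a ≠ c) (hbd : b ≠ d) (had : a ≠ d) : G.dist a d = 3 := by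
  have hp : (SimpleGraph.Walk.cons h1 (SimpleGraph.Walk.cons h2
      (SimpleGraph.Walk.cons h3 SimpleGraph.Walk.nil))).IsPath := by
    simp [SimpleGraph.Walk.isPath_def, h1.ne, h2.ne, h3.ne, hac, hbd, had]
  simpa using (tree_path_length hT hp).symm

lemma dist_eq_four (hT : G.IsTree) {a b c d e : V} (h1 : G.Adj a b) (h2 : G.Adj b c)
    (h3 : G.Adj c d) (h4 : G.Adj d e) (hac : a ≠ c) (had : a ≠ d) (hae : a ≠ e)
    (hbd : b ≠ d) (hbe : b ≠ e) (hce : c ≠ e) : G.dist a e = 4 := by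
  have hp : (SimpleGraph.Walk.cons h1 (SimpleGraph.Walk.cons h2
      (SimpleGraph.Walk.cons h3 (SimpleGraph.Walk.cons h4 SimpleGraph.Walk.nil)))).IsPath := by
    simp [SimpleGraph.Walk.isPath_def, h1.ne, h2.ne, h3.ne, h4.ne, hac, had, hae, hbd, hbe, hce]
  simpa using (tree_path_length hT hp).symm

lemma no_triangle (hT : G.IsTree) {a b c : V} (h1 : G.Adj a b) (h2 : G.Adj b c)
    (h3 : G.Adj a c) : False := by
  have := dist_eq_two hT h1 h2 h3.ne
  rw [show G.dist a c = 1 from SimpleGraph.dist_eq_one_iff_adj.mpr h3] at this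
  omega

lemma adj_of_dist_eq_one {a b : V} (h : G.dist a b = 1) : G.Adj a b :=
  SimpleGraph.dist_eq_one_iff_adj.mp h

lemma forward {V : Type*} [Fintype V] (G : SimpleGraph V) [DecidableRel G.Adj]
    (hT : G.IsTree) (hk : G.numStatusValues = 2) :
    G.IsStarWithAtLeastTwoLeaves ∨ G.IsBalancedDoubleStar := by
  classical
  have hC := hT.isConnected
  unfold SimpleGraph.numStatusValues at hk
  obtain ⟨A, B, hAB, himg⟩ := Finset.card_eq_two.mp hk
  have hmem : ∀ v : V, G.status v = A ∨ G.status v = B := by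
    intro v
    have : G.status v ∈ Finset.univ.image G.status :=
      Finset.mem_image_of_mem _ (Finset.mem_univ v)
    rw [himg] at this
    simpa using this
  have hexA : ∃ v : V, G.status v = A := by
    have : A ∈ Finset.univ.image G.status := by rw [himg]; simp
    simpa using this
  have hexB : ∃ v : V, G.status v = B := by
    have : B ∈ Finset.univ.image G.status := by rw [himg]; simp
    simpa using this
  obtain ⟨va, hva⟩ := hexA
  obtain ⟨vb, hvb⟩ := hexB
  have hvab : va ≠ vb := fun h => hAB (by rw [← hva, ← hvb, h])
  -- card ≥ 3
  have hcard3 : 3 ≤ Fintype.card V := by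
    by_contra hle
    push_neg at hle
    have h2 : Fintype.card V = 2 := by
      have : 2 ≤ Fintype.card V := Fintype.one_lt_card_iff.mpr ⟨va, vb, hvab⟩
      omega
    have huniv : (Finset.univ : Finset V) = {va, vb} := by
      apply (Finset.eq_of_subset_of_card_le (Finset.subset_univ _) _).symm
      rw [Finset.card_pair hvab, Finset.card_univ, h2]
    have h1 : G.status va = G.dist va vb := by
      unfold SimpleGraph.status
      rw [huniv, Finset.sum_pair hvab, SimpleGraph.dist_self]
      omega
    have h2' : G.status vb = G.dist vb va := by
      unfold SimpleGraph.status
      rw [huniv, Finset.sum_pair hvab, SimpleGraph.dist_self, SimpleGraph.dist_comm]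
      omega
    apply hAB
    rw [← hva, ← hvb, h1, h2', SimpleGraph.dist_comm]
  have hdiam : ∀ x y : V, G.dist x y ≤ 3 := diam_le_three hT hAB hmem
  -- maximal distance pair
  obtain ⟨⟨x, y⟩, -, hmax'⟩ := Finset.exists_max_image (Finset.univ : Finset (V × V))
    (fun q => G.dist q.1 q.2) ⟨(va, va), Finset.mem_univ _⟩
  have hmax : ∀ a b : V, G.dist a b ≤ G.dist x y := fun a b => hmax' (a, b) (Finset.mem_univ _)
  have hd1 : 1 ≤ G.dist x y := le_trans (hC.pos_dist_of_ne hvab) (hmax va vb)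
  have hd3 : G.dist x y ≤ 3 := hdiam x y
  -- rule out diameter 1
  have hdne1 : G.dist x y ≠ 1 := by
    intro hd
    obtain ⟨c, hc⟩ : ∃ c : V, c ≠ va ∧ c ≠ vb := by
      by_contra hno
      push_neg at hno
      have : (Finset.univ : Finset V) ⊆ {va, vb} := by
        intro z _
        rcases eq_or_ne z va with rfl | hza
        · simp
        rcases eq_or_ne z vb with rfl | hzb
        · simp
        · exact absurd (hno z hza) hzb
      have := Finset.card_le_card this
      rw [Finset.card_univ, Finset.card_pair hvab] at this
      omega
    have hadj : ∀ a b : V, a ≠ b → G.Adj a b := by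
      intro a b hab
      have h1 := hmax a b
      have h2 := hC.pos_dist_of_ne hab
      exact adj_of_dist_eq_one (by omega)
    exact no_triangle hT (hadj va vb hvab) (hadj vb c (Ne.symm hc.2)) (hadj va c (Ne.symm hc.1))
  rcases Nat.lt_or_ge (G.dist x y) 3 with hlt | hge
  -- CASE diameter 2 : star
  · have hd2 : G.dist x y = 2 := by omega
    left
    obtain ⟨p, hp, hlen⟩ := hC.exists_path_of_dist x y
    set c := p.getVert 1 with hc
    have hplen : p.length = 2 := by rw [hlen, hd2]
    have hxc : G.Adj x c := by
      have := p.adj_getVert_succ (by omega : 0 < p.length)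
      simpa using this
    have hcy : G.Adj c y := by
      have := p.adj_getVert_succ (by omega : 1 < p.length)
      rwa [show p.getVert 2 = y by rw [← hplen]; exact p.getVert_length] at this
    have hdxc : G.dist x c = 1 := by
      have := dist_getVert hC hlen (by omega : 1 ≤ p.length)
      simpa using this
    have hxy : x ≠ y := fun h => by rw [h, SimpleGraph.dist_self] at hd2; omega
    have hclaim : ∀ v : V, v ≠ c → G.Adj c v := by
      intro v hv
      have h1 : G.dist v c ≤ 2 := by rw [← hd2]; exact hmax v c
      have h2 : 1 ≤ G.dist v c := hC.pos_dist_of_ne hv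
      rcases Nat.lt_or_ge (G.dist v c) 2 with hl | hg
      · exact (adj_of_dist_eq_one (by omega)).symm
      exfalso
      have hvc2 : G.dist v c = 2 := by omega
      obtain ⟨q, hq, hqlen⟩ := hC.exists_path_of_dist v c
      set m := q.getVert 1 with hm
      have hqlen2 : q.length = 2 := by rw [hqlen, hvc2]
      have hvm : G.Adj v m := by
        have := q.adj_getVert_succ (by omega : 0 < q.length)
        simpa using this
      have hmc : G.Adj m c := by
        have := q.adj_getVert_succ (by omega : 1 < q.length)
        rwa [show q.getVert 2 = c by rw [← hqlen2]; exact q.getVert_length] at this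
      have hvx : v ≠ x := by
        intro h
        rw [h] at hvc2
        omega
      by_cases hmx : m = x
      · -- use y : path v - x - c - y
        have hvy : v ≠ y := by
          intro h
          rw [h] at hvc2
          have : G.dist y c = 1 := by
            rw [SimpleGraph.dist_comm]
            exact SimpleGraph.dist_eq_one_iff_adj.mpr hcy
          omega
        have := dist_eq_three hT hvm hmc hcy hv (by rw [hmx]; exact hxy) hvy
        have := hmax v y
        omega
      · -- path v - m - c - x
        have := dist_eq_three hT hvm hmc hxc.symm hv hmx hvx
        have := hmax v x
        omega
    refine ⟨hcard3, c, fun u v => ⟨fun huv => ?_, fun h => ?_⟩⟩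
    · by_cases hu : u = c
      · exact Or.inl ⟨hu, fun hv => huv.ne (hu.trans hv.symm)⟩
      by_cases hv : v = c
      · exact Or.inr ⟨hv, hu⟩
      · exact absurd (no_triangle hT (hclaim u hu) huv ((hclaim v hv))) (by simp)
    · rcases h with ⟨rfl, hv⟩ | ⟨rfl, hu⟩
      · exact hclaim v hv
      · exact (hclaim u hu).symm
  -- CASE diameter 3 : balanced double star
  · right
    have hdxy : G.dist x y = 3 := le_antisymm hd3 hge
    obtain ⟨p, hp, hlen⟩ := hC.exists_path_of_dist x y
    set c1 := p.getVert 1 with hc1def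
    set c2 := p.getVert 2 with hc2def
    have hplen : p.length = 3 := by rw [hlen, hdxy]
    have hx1 : G.Adj x c1 := by
      have := p.adj_getVert_succ (by omega : 0 < p.length)
      simpa using this
    have h12 : G.Adj c1 c2 := p.adj_getVert_succ (by omega : 1 < p.length)
    have h2y : G.Adj c2 y := by
      have := p.adj_getVert_succ (by omega : 2 < p.length)
      rwa [show p.getVert 3 = y by rw [← hplen]; exact p.getVert_length] at this
    have hdx1 : G.dist x c1 = 1 := by
      have := dist_getVert hC hlen (by omega : 1 ≤ p.length)
      simpa using this
    have hdx2 : G.dist x c2 = 2 := by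
      have := dist_getVert hC hlen (by omega : 2 ≤ p.length)
      simpa using this
    have hxy : x ≠ y := by intro h; rw [h, SimpleGraph.dist_self] at hdxy; omega
    have hxc2 : x ≠ c2 := by intro h; rw [← h, SimpleGraph.dist_self] at hdx2; omega
    have hc1y : c1 ≠ y := by
      intro h
      rw [h] at hdx1
      omega
    have hc2y : c2 ≠ y := h2y.ne
    have hd1y : G.dist c1 y = 2 := dist_eq_two hT h12 h2y hc1y
    have hdyc2 : G.dist y c2 = 1 := by
      rw [SimpleGraph.dist_comm]
      exact SimpleGraph.dist_eq_one_iff_adj.mpr h2y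
    -- every other vertex is adjacent to c1 or c2
    have hall : ∀ w : V, w ≠ c1 → w ≠ c2 → G.Adj c1 w ∨ G.Adj c2 w := by
      intro v h1 h2
      rcases tree_step hT h12 v with hs | hs
      · -- v is on the c1 side
        left
        have e1pos : 1 ≤ G.dist v c1 := hC.pos_dist_of_ne h1
        have e2le : G.dist v c2 ≤ 3 := hdiam _ _
        rcases Nat.lt_or_ge (G.dist v c1) 2 with hl | hg2
        · exact (adj_of_dist_eq_one (by omega)).symm
        exfalso
        have hv2 : G.dist v c1 = 2 := by omega
        obtain ⟨q, hq, hqlen⟩ := hC.exists_path_of_dist v c1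
        set m := q.getVert 1 with hmdef
        have hqlen2 : q.length = 2 := by rw [hqlen, hv2]
        have hvm : G.Adj v m := by
          have := q.adj_getVert_succ (by omega : 0 < q.length)
          simpa using this
        have hm1 : G.Adj m c1 := by
          have := q.adj_getVert_succ (by omega : 1 < q.length)
          rwa [show q.getVert 2 = c1 by rw [← hqlen2]; exact q.getVert_length] at this
        have hvy : v ≠ y := by
          intro h
          rw [h] at hs hv2
          omega
        have hm2 : m ≠ c2 := by
          intro h
          rw [h] at hvm
          have : G.dist v c2 = 1 := SimpleGraph.dist_eq_one_iff_adj.mpr hvm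
          omega
        have hmy : m ≠ y := by
          intro h
          rw [h] at hm1
          have : G.dist c1 y = 1 := by
            rw [SimpleGraph.dist_comm]
            exact SimpleGraph.dist_eq_one_iff_adj.mpr hm1
          omega
        have h4 := dist_eq_four hT hvm hm1 h12 h2y h1 h2 hvy hm2 hmy hc1y
        have := hmax v y
        omega
      · -- v is on the c2 side
        right
        have e2pos : 1 ≤ G.dist v c2 := hC.pos_dist_of_ne h2
        have e1le : G.dist v c1 ≤ 3 := hdiam _ _
        rcases Nat.lt_or_ge (G.dist v c2) 2 with hl | hg2
        · exact (adj_of_dist_eq_one (by omega)).symm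
        exfalso
        have hv2 : G.dist v c2 = 2 := by omega
        obtain ⟨q, hq, hqlen⟩ := hC.exists_path_of_dist v c2
        set m := q.getVert 1 with hmdef
        have hqlen2 : q.length = 2 := by rw [hqlen, hv2]
        have hvm : G.Adj v m := by
          have := q.adj_getVert_succ (by omega : 0 < q.length)
          simpa using this
        have hm2 : G.Adj m c2 := by
          have := q.adj_getVert_succ (by omega : 1 < q.length)
          rwa [show q.getVert 2 = c2 by rw [← hqlen2]; exact q.getVert_length] at this
        have hvx : v ≠ x := by
          intro h
          rw [h] at hs
          omega
        have hm1 : m ≠ c1 := by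
          intro h
          rw [h] at hvm
          have : G.dist v c1 = 1 := SimpleGraph.dist_eq_one_iff_adj.mpr hvm
          omega
        have hmx : m ≠ x := by
          intro h
          rw [h] at hm2
          have : G.dist x c2 = 1 := SimpleGraph.dist_eq_one_iff_adj.mpr hm2
          omega
        have h4 := dist_eq_four hT hvm hm2 h12.symm hx1.symm h2 h1 hvx hm1 hmx
          (Ne.symm hxc2)
        have := hmax v x
        omega
    have hall' : ∀ w : V, w ≠ c2 → w ≠ c1 → G.Adj c2 w ∨ G.Adj c1 w := fun w h2 h1 =>
      (hall w h1 h2).symm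
    have hnot : ∀ w : V, w ≠ c1 → w ≠ c2 → ¬(G.Adj c1 w ∧ G.Adj c2 w) := by
      rintro w h1 h2 ⟨ha, hb⟩
      exact no_triangle hT ha hb.symm h12
    have hnot' : ∀ w : V, w ≠ c2 → w ≠ c1 → ¬(G.Adj c2 w ∧ G.Adj c1 w) := by
      rintro w h2 h1 ⟨ha, hb⟩
      exact hnot w h1 h2 ⟨hb, ha⟩
    -- uniqueness of the neighbor of a pendant vertex
    have hside : ∀ d1 d2 : V, G.Adj d1 d2 →
        (∀ w, w ≠ d1 → w ≠ d2 → G.Adj d1 w ∨ G.Adj d2 w) →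
        (∀ w, w ≠ d1 → w ≠ d2 → ¬(G.Adj d1 w ∧ G.Adj d2 w)) →
        ∀ v, v ≠ d1 → v ≠ d2 → G.Adj d1 v → ∀ u, G.Adj v u → u = d1 := by
      intro d1 d2 hd hall0 hnot0 v h1 h2 hadj u hu
      by_contra hne
      have hu2 : u ≠ d2 := by
        intro h
        exact hnot0 v h1 h2 ⟨hadj, by rw [← h]; exact hu.symm⟩
      rcases hall0 u hne hu2 with h | h
      · exact no_triangle hT hadj hu h
      · have hd3' := dist_eq_three hT hadj hu h.symm (Ne.symm hne) h2 hd.ne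
        have : G.dist d1 d2 = 1 := SimpleGraph.dist_eq_one_iff_adj.mpr hd
        omega
    have hdegree : ∀ d1 d2 : V, G.Adj d1 d2 →
        (∀ w, w ≠ d1 → w ≠ d2 → G.Adj d1 w ∨ G.Adj d2 w) →
        (∀ w, w ≠ d1 → w ≠ d2 → ¬(G.Adj d1 w ∧ G.Adj d2 w)) →
        ∀ v, v ≠ d1 → v ≠ d2 → G.Adj d1 v → G.degree v = 1 := by
      intro d1 d2 hd hall0 hnot0 v h1 h2 hadj
      have hnb : G.neighborFinset v = {d1} := by
        ext u
        simp only [SimpleGraph.mem_neighborFinset, Finset.mem_singleton]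
        constructor
        · exact hside d1 d2 hd hall0 hnot0 v h1 h2 hadj u
        · rintro rfl
          exact hadj.symm
      rw [← SimpleGraph.card_neighborFinset_eq_degree, hnb, Finset.card_singleton]
    have hthird : ∀ v : V, v ≠ c1 → v ≠ c2 →
        ((G.Adj c1 v ∧ ¬ G.Adj c2 v) ∨ (G.Adj c2 v ∧ ¬ G.Adj c1 v)) ∧ G.degree v = 1 := by
      intro v h1 h2
      rcases hall v h1 h2 with h | h
      · exact ⟨Or.inl ⟨h, fun hb => hnot v h1 h2 ⟨h, hb⟩⟩,
          hdegree c1 c2 h12 hall hnot v h1 h2 h⟩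
      · exact ⟨Or.inr ⟨h, fun ha => hnot v h1 h2 ⟨ha, h⟩⟩,
          hdegree c2 c1 h12.symm hall' hnot' v h2 h1 h⟩
    -- the filter identity for the central edge
    have hfilt : ∀ d1 d2 : V, G.Adj d1 d2 →
        (∀ w, w ≠ d1 → w ≠ d2 → G.Adj d1 w ∨ G.Adj d2 w) →
        Finset.univ.filter (fun w => G.dist w d2 = G.dist w d1 + 1)
          = insert d1 ((G.neighborFinset d1).erase d2) := by
      intro d1 d2 hd hall0
      ext w
      simp only [Finset.mem_filter, Finset.mem_univ, true_and, Finset.mem_insert,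
        Finset.mem_erase, SimpleGraph.mem_neighborFinset]
      constructor
      · intro hw
        by_cases h1 : w = d1
        · exact Or.inl h1
        right
        have hw2 : w ≠ d2 := by
          intro h
          rw [h, SimpleGraph.dist_self] at hw
          omega
        refine ⟨hw2, ?_⟩
        rcases hall0 w h1 hw2 with h | h
        · exact h
        · exfalso
          have ha : G.dist w d2 = 1 := SimpleGraph.dist_eq_one_iff_adj.mpr h.symm
          have hb : 1 ≤ G.dist w d1 := hC.pos_dist_of_ne h1
          omega
      · rintro (rfl | ⟨hne2, hadj⟩)
        · simp [SimpleGraph.dist_self, SimpleGraph.dist_eq_one_iff_adj.mpr hd]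
        · have ha : G.dist w d1 = 1 := SimpleGraph.dist_eq_one_iff_adj.mpr hadj.symm
          have hb : G.dist w d2 = 2 := dist_eq_two hT hadj.symm hd hne2
          omega
    have hfiltnot : Finset.univ.filter (fun w => ¬ (G.dist w c2 = G.dist w c1 + 1))
        = Finset.univ.filter (fun w => G.dist w c1 = G.dist w c2 + 1) := by
      ext w
      simp only [Finset.mem_filter, Finset.mem_univ, true_and]
      constructor
      · intro h
        rcases tree_step hT h12 w with hs | hs
        · exact absurd hs h
        · exact hs
      · intro h
        omega
    have hcardfilt : ∀ d1 d2 : V, G.Adj d1 d2 →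
        (∀ w, w ≠ d1 → w ≠ d2 → G.Adj d1 w ∨ G.Adj d2 w) →
        (Finset.univ.filter (fun w => G.dist w d2 = G.dist w d1 + 1)).card = G.degree d1 := by
      intro d1 d2 hd hall0
      rw [hfilt d1 d2 hd hall0]
      rw [Finset.card_insert_of_notMem (by simp [Finset.mem_erase])]
      rw [Finset.card_erase_of_mem ((SimpleGraph.mem_neighborFinset _ _ _).mpr hd)]
      rw [SimpleGraph.card_neighborFinset_eq_degree]
      have : 1 ≤ G.degree d1 := by
        rw [← SimpleGraph.card_neighborFinset_eq_degree]
        exact Finset.card_pos.mpr ⟨d2, (SimpleGraph.mem_neighborFinset _ _ _).mpr hd⟩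
      omega
    have e12 := status_edge hT h12
    rw [hfiltnot, hcardfilt c1 c2 h12 hall, hcardfilt c2 c1 h12.symm hall'] at e12
    -- leaf filter identity
    have hleaffilt : ∀ d1 d2 l : V, G.Adj d1 d2 → G.Adj d1 l → l ≠ d2 →
        (∀ w, w ≠ d1 → w ≠ d2 → G.Adj d1 w ∨ G.Adj d2 w) →
        Finset.univ.filter (fun w => G.dist w l = G.dist w d1 + 1)
          = Finset.univ.erase l := by
      intro d1 d2 l hd hl hld2 hall0
      ext w
      simp only [Finset.mem_filter, Finset.mem_univ, true_and, Finset.mem_erase, and_true]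
      constructor
      · intro hw
        intro h
        rw [h, SimpleGraph.dist_self] at hw
        omega
      · intro hw
        by_cases h1 : w = d1
        · subst h1
          simp [SimpleGraph.dist_self, SimpleGraph.dist_eq_one_iff_adj.mpr hl]
        by_cases h2 : w = d2
        · subst h2
          have ha : G.dist w l = 2 := dist_eq_two hT hd.symm hl (Ne.symm hld2)
          have hb : G.dist w d1 = 1 := SimpleGraph.dist_eq_one_iff_adj.mpr hd.symm
          omega
        rcases hall0 w h1 h2 with h | h
        · have ha : G.dist w l = 2 := dist_eq_two hT h.symm hl hw
          have hb : G.dist w d1 = 1 := SimpleGraph.dist_eq_one_iff_adj.mpr h.symm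
          omega
        · have ha : G.dist w l = 3 := dist_eq_three hT h.symm hd.symm hl h1 (Ne.symm hld2) hw
          have hb : G.dist w d1 = 2 := dist_eq_two hT h.symm hd.symm h1
          omega
    have hleafnot : ∀ d1 l : V,
        Finset.univ.filter (fun w => G.dist w l = G.dist w d1 + 1) = Finset.univ.erase l →
        Finset.univ.filter (fun w => ¬ (G.dist w l = G.dist w d1 + 1)) = {l} := by
      intro d1 l hfl
      have h1 : Finset.univ.filter (fun w => ¬ (G.dist w l = G.dist w d1 + 1))
          = Finset.univ \ Finset.univ.filter (fun w => G.dist w l = G.dist w d1 + 1) :=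
        Finset.filter_not _ _
      rw [h1, hfl]
      ext w
      simp only [Finset.mem_sdiff, Finset.mem_univ, true_and, Finset.mem_erase,
        Finset.mem_singleton]
      constructor
      · intro h
        by_contra hne
        exact h ⟨hne, trivial⟩
      · rintro rfl
        simp
    -- status relations for the two leaves x and y
    have hfx := hleaffilt c1 c2 x h12 hx1.symm hxc2 hall
    have ex := status_edge hT hx1.symm
    rw [hfx, hleafnot c1 x hfx, Finset.card_singleton,
      Finset.card_erase_of_mem (Finset.mem_univ x), Finset.card_univ] at ex
    have hfy := hleaffilt c2 c1 y h12.symm h2y (Ne.symm hc1y) hall'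
    have ey := status_edge hT h2y
    rw [hfy, hleafnot c2 y hfy, Finset.card_singleton,
      Finset.card_erase_of_mem (Finset.mem_univ y), Finset.card_univ] at ey
    -- at least four vertices
    have hn4 : 4 ≤ Fintype.card V := by
      have hsub := Finset.card_le_card (Finset.subset_univ ({x, c1, c2, y} : Finset V))
      rw [Finset.card_univ] at hsub
      have hc4 : ({x, c1, c2, y} : Finset V).card = 4 := by
        rw [Finset.card_insert_of_notMem (by simp [hx1.ne, hxc2, hxy]),
          Finset.card_insert_of_notMem (by simp [h12.ne, hc1y]),
          Finset.card_pair hc2y]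
      omega
    -- balancedness via the two status values
    have hdegeq : G.degree c1 = G.degree c2 := by
      have m1 := hmem c1
      have m2 := hmem c2
      have mx := hmem x
      have my := hmem y
      rcases m1 with h|h <;> rcases m2 with h1|h1 <;> rcases mx with h2|h2 <;>
        rcases my with h3|h3 <;> omega
    have hdeg2c : 2 ≤ G.degree c1 := by
      have hsub : ({c2, x} : Finset V) ⊆ G.neighborFinset c1 := by
        intro u hu
        rcases Finset.mem_insert.mp hu with rfl | hu
        · exact (SimpleGraph.mem_neighborFinset _ _ _).mpr h12
        · rw [Finset.mem_singleton] at hu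
          subst hu
          exact (SimpleGraph.mem_neighborFinset _ _ _).mpr hx1.symm
      have := Finset.card_le_card hsub
      rw [Finset.card_pair (fun h => hxc2 h.symm)] at this
      rw [← SimpleGraph.card_neighborFinset_eq_degree]
      exact this
    exact ⟨c1, c2, h12.ne, h12, hthird, hdegeq, hdeg2c⟩

lemma backward_star {V : Type*} [Fintype V] (G : SimpleGraph V)
    (hT : G.IsTree) (hS : G.IsStarWithAtLeastTwoLeaves) : G.numStatusValues = 2 := by
  classical
  obtain ⟨hcard, c, hchar⟩ := hS
  have hadj : ∀ v : V, v ≠ c → G.Adj c v := by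
    intro v hv
    rw [hchar]
    exact Or.inl ⟨rfl, hv⟩
  set n := Fintype.card V with hn
  have hstatc : G.status c = n - 1 := by
    unfold SimpleGraph.status
    rw [← Finset.add_sum_erase _ _ (Finset.mem_univ c), SimpleGraph.dist_self]
    have hone : ∀ u ∈ Finset.univ.erase c, G.dist c u = 1 := fun u hu =>
      SimpleGraph.dist_eq_one_iff_adj.mpr (hadj u (Finset.mem_erase.mp hu).1)
    rw [Finset.sum_congr rfl hone, Finset.sum_const, smul_eq_mul, mul_one,
      Finset.card_erase_of_mem (Finset.mem_univ c), Finset.card_univ]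
    omega
  have hstatv : ∀ v : V, v ≠ c → G.status v = 2 * n - 3 := by
    intro v hv
    unfold SimpleGraph.status
    rw [← Finset.add_sum_erase _ _ (Finset.mem_univ v), SimpleGraph.dist_self]
    have hcmem : c ∈ Finset.univ.erase v := Finset.mem_erase.mpr ⟨Ne.symm hv, Finset.mem_univ c⟩
    rw [← Finset.add_sum_erase _ _ hcmem]
    have hdvc : G.dist v c = 1 := SimpleGraph.dist_eq_one_iff_adj.mpr (hadj v hv).symm
    have hrest : ∀ u ∈ (Finset.univ.erase v).erase c, G.dist v u = 2 := by
      intro u hu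
      obtain ⟨huc, huv', -⟩ : u ≠ c ∧ u ≠ v ∧ True := by
        have h1 := Finset.mem_erase.mp hu
        have h2 := Finset.mem_erase.mp h1.2
        exact ⟨h1.1, h2.1, trivial⟩
      exact dist_eq_two hT (hadj v hv).symm (hadj u huc) (Ne.symm huv')
    rw [Finset.sum_congr rfl hrest, Finset.sum_const, smul_eq_mul,
      Finset.card_erase_of_mem hcmem, Finset.card_erase_of_mem (Finset.mem_univ v),
      Finset.card_univ, hdvc]
    have : 3 ≤ n := hcard
    omega
  have himg : Finset.univ.image G.status = {n - 1, 2 * n - 3} := by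
    apply Finset.Subset.antisymm
    · intro s hs
      obtain ⟨v, -, rfl⟩ := Finset.mem_image.mp hs
      by_cases hv : v = c
      · subst hv
        rw [hstatc]
        simp
      · rw [hstatv v hv]
        simp
    · intro s hs
      rcases Finset.mem_insert.mp hs with rfl | hs
      · exact Finset.mem_image.mpr ⟨c, Finset.mem_univ c, hstatc⟩
      · rw [Finset.mem_singleton] at hs
        subst hs
        obtain ⟨v, hv⟩ : ∃ v : V, v ≠ c := by
          have : 1 < Fintype.card V := by omega
          obtain ⟨a, b, hab⟩ := Fintype.one_lt_card_iff.mp this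
          rcases eq_or_ne a c with rfl | ha
          · exact ⟨b, Ne.symm hab⟩
          · exact ⟨a, ha⟩
        exact Finset.mem_image.mpr ⟨v, Finset.mem_univ v, hstatv v hv⟩
  unfold SimpleGraph.numStatusValues
  rw [himg]
  rw [Finset.card_pair (by omega : n - 1 ≠ 2 * n - 3)]

lemma backward_double {V : Type*} [Fintype V] (G : SimpleGraph V) [DecidableRel G.Adj]
    (hT : G.IsTree) (hS : G.IsBalancedDoubleStar) : G.numStatusValues = 2 := by
  classical
  obtain ⟨c1, c2, hne, h12, hpend, hdeq, hd2⟩ := hS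
  set R : Finset V := (Finset.univ.erase c1).erase c2 with hR
  set L1 : Finset V := R.filter (fun w => G.Adj c1 w) with hL1
  set L2 : Finset V := R.filter (fun w => ¬ G.Adj c1 w) with hL2
  have hmemR : ∀ w : V, w ∈ R ↔ w ≠ c1 ∧ w ≠ c2 := by
    intro w
    simp only [hR, Finset.mem_erase, Finset.mem_univ, and_true]
    tauto
  have hmemL1 : ∀ w : V, w ∈ L1 ↔ w ≠ c1 ∧ w ≠ c2 ∧ G.Adj c1 w := by
    intro w
    simp only [hL1, Finset.mem_filter, hmemR]
    tauto
  have hmemL2 : ∀ w : V, w ∈ L2 ↔ w ≠ c1 ∧ w ≠ c2 ∧ G.Adj c2 w := by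
    intro w
    simp only [hL2, Finset.mem_filter, hmemR]
    constructor
    · rintro ⟨⟨hw1, hw2⟩, hna⟩
      refine ⟨hw1, hw2, ?_⟩
      rcases (hpend w hw1 hw2).1 with h | h
      · exact absurd h.1 hna
      · exact h.1
    · rintro ⟨hw1, hw2, ha⟩
      refine ⟨⟨hw1, hw2⟩, ?_⟩
      rcases (hpend w hw1 hw2).1 with h | h
      · exact absurd ha h.2
      · exact h.2
  -- the unique neighbor of a pendant vertex
  have huniq : ∀ w : V, w ∈ L1 → ∀ u, G.Adj w u → u = c1 := by
    intro w hw u hu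
    rw [hmemL1] at hw
    have hnb : G.neighborFinset w = {c1} := by
      apply Finset.eq_singleton_iff_unique_mem.mpr
      refine ⟨(SimpleGraph.mem_neighborFinset _ _ _).mpr hw.2.2.symm, ?_⟩
      intro b hb
      by_contra hbc
      have h2 : 2 ≤ (G.neighborFinset w).card := by
        have : ({b, c1} : Finset V) ⊆ G.neighborFinset w := by
          intro z hz
          rcases Finset.mem_insert.mp hz with rfl | hz
          · exact hb
          · rw [Finset.mem_singleton] at hz
            subst hz
            exact (SimpleGraph.mem_neighborFinset _ _ _).mpr hw.2.2.symm
        have := Finset.card_le_card this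
        rwa [Finset.card_pair hbc] at this
      rw [SimpleGraph.card_neighborFinset_eq_degree, (hpend w hw.1 hw.2.1).2] at h2
      omega
    have : u ∈ G.neighborFinset w := (SimpleGraph.mem_neighborFinset _ _ _).mpr hu
    rw [hnb, Finset.mem_singleton] at this
    exact this
  have huniq2 : ∀ w : V, w ∈ L2 → ∀ u, G.Adj w u → u = c2 := by
    intro w hw u hu
    rw [hmemL2] at hw
    have hnb : G.neighborFinset w = {c2} := by
      apply Finset.eq_singleton_iff_unique_mem.mpr
      refine ⟨(SimpleGraph.mem_neighborFinset _ _ _).mpr hw.2.2.symm, ?_⟩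
      intro b hb
      by_contra hbc
      have h2 : 2 ≤ (G.neighborFinset w).card := by
        have : ({b, c2} : Finset V) ⊆ G.neighborFinset w := by
          intro z hz
          rcases Finset.mem_insert.mp hz with rfl | hz
          · exact hb
          · rw [Finset.mem_singleton] at hz
            subst hz
            exact (SimpleGraph.mem_neighborFinset _ _ _).mpr hw.2.2.symm
        have := Finset.card_le_card this
        rwa [Finset.card_pair hbc] at this
      rw [SimpleGraph.card_neighborFinset_eq_degree, (hpend w hw.1 hw.2.1).2] at h2
      omega
    have : u ∈ G.neighborFinset w := (SimpleGraph.mem_neighborFinset _ _ _).mpr hu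
    rw [hnb, Finset.mem_singleton] at this
    exact this
  -- cardinalities
  have hnbc1 : G.neighborFinset c1 = insert c2 L1 := by
    ext u
    simp only [SimpleGraph.mem_neighborFinset, Finset.mem_insert, hmemL1]
    constructor
    · intro h
      rcases eq_or_ne u c2 with rfl | hu2
      · exact Or.inl rfl
      · exact Or.inr ⟨h.ne', hu2, h⟩
    · rintro (rfl | ⟨h1, h2, h3⟩)
      · exact h12
      · exact h3
  have hnbc2 : G.neighborFinset c2 = insert c1 L2 := by
    ext u
    simp only [SimpleGraph.mem_neighborFinset, Finset.mem_insert, hmemL2]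
    constructor
    · intro h
      rcases eq_or_ne u c1 with rfl | hu1
      · exact Or.inl rfl
      · exact Or.inr ⟨hu1, h.ne', h⟩
    · rintro (rfl | ⟨h1, h2, h3⟩)
      · exact h12.symm
      · exact h3
  have hc2L1 : c2 ∉ L1 := fun h => ((hmemL1 c2).mp h).2.1 rfl
  have hc1L2 : c1 ∉ L2 := fun h => ((hmemL2 c1).mp h).1 rfl
  have hdeg1 : G.degree c1 = 1 + L1.card := by
    rw [← SimpleGraph.card_neighborFinset_eq_degree, hnbc1,
      Finset.card_insert_of_notMem hc2L1]
    omega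
  have hdeg2' : G.degree c2 = 1 + L2.card := by
    rw [← SimpleGraph.card_neighborFinset_eq_degree, hnbc2,
      Finset.card_insert_of_notMem hc1L2]
    omega
  set a : ℕ := L1.card with ha
  have hL2card : L2.card = a := by omega
  have hapos : 1 ≤ a := by omega
  -- sum decomposition
  have hsum : ∀ f : V → ℕ,
      ∑ u : V, f u = f c1 + f c2 + ((∑ u ∈ L1, f u) + (∑ u ∈ L2, f u)) := by
    intro f
    have h1 : ∑ u ∈ Finset.univ.erase c1, f u + f c1 = ∑ u : V, f u :=
      Finset.sum_erase_add _ _ (Finset.mem_univ c1)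
    have h2 : ∑ u ∈ R, f u + f c2 = ∑ u ∈ Finset.univ.erase c1, f u := by
      rw [hR]
      exact Finset.sum_erase_add _ _ (Finset.mem_erase.mpr ⟨Ne.symm hne, Finset.mem_univ c2⟩)
    have h3 : (∑ u ∈ L1, f u) + (∑ u ∈ L2, f u) = ∑ u ∈ R, f u := by
      rw [hL1, hL2]
      exact Finset.sum_filter_add_sum_filter_not R _ f
    omega
  -- distances from c1
  have hdc1 : ∀ u : V, u ∈ L1 → G.dist c1 u = 1 := fun u hu =>
    SimpleGraph.dist_eq_one_iff_adj.mpr ((hmemL1 u).mp hu).2.2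
  have hdc1' : ∀ u : V, u ∈ L2 → G.dist c1 u = 2 := by
    intro u hu
    rw [hmemL2] at hu
    exact dist_eq_two hT h12 hu.2.2 (Ne.symm hu.1)
  have hdc2 : ∀ u : V, u ∈ L2 → G.dist c2 u = 1 := fun u hu =>
    SimpleGraph.dist_eq_one_iff_adj.mpr ((hmemL2 u).mp hu).2.2
  have hdc2' : ∀ u : V, u ∈ L1 → G.dist c2 u = 2 := by
    intro u hu
    rw [hmemL1] at hu
    exact dist_eq_two hT h12.symm hu.2.2 (Ne.symm hu.2.1)
  have hd12 : G.dist c1 c2 = 1 := SimpleGraph.dist_eq_one_iff_adj.mpr h12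
  have hd21 : G.dist c2 c1 = 1 := SimpleGraph.dist_eq_one_iff_adj.mpr h12.symm
  -- status of the centers
  have hstatc1 : G.status c1 = 3 * a + 1 := by
    unfold SimpleGraph.status
    rw [hsum (fun u => G.dist c1 u), SimpleGraph.dist_self, hd12,
      Finset.sum_congr rfl hdc1, Finset.sum_congr rfl hdc1',
      Finset.sum_const, Finset.sum_const, smul_eq_mul, smul_eq_mul, ← ha, hL2card]
    omega
  have hstatc2 : G.status c2 = 3 * a + 1 := by
    unfold SimpleGraph.status
    rw [hsum (fun u => G.dist c2 u), SimpleGraph.dist_self, hd21,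
      Finset.sum_congr rfl hdc2', Finset.sum_congr rfl hdc2,
      Finset.sum_const, Finset.sum_const, smul_eq_mul, smul_eq_mul, ← ha, hL2card]
    omega
  -- status of a pendant vertex in L1
  have hstatL1 : ∀ l : V, l ∈ L1 → G.status l = 5 * a + 1 := by
    intro l hl
    have hl' := (hmemL1 l).mp hl
    have hld1 : G.dist l c1 = 1 := SimpleGraph.dist_eq_one_iff_adj.mpr hl'.2.2.symm
    have hld2 : G.dist l c2 = 2 := dist_eq_two hT hl'.2.2.symm h12 hl'.2.1
    have hsame : ∀ u ∈ L1.erase l, G.dist l u = 2 := by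
      intro u hu
      have hu' := (hmemL1 u).mp (Finset.mem_of_mem_erase hu)
      exact dist_eq_two hT hl'.2.2.symm hu'.2.2 (Ne.symm (Finset.mem_erase.mp hu).1)
    have hother : ∀ u ∈ L2, G.dist l u = 3 := by
      intro u hu
      have hu' := (hmemL2 u).mp hu
      have hlu : l ≠ u := by
        intro h
        subst h
        exact hne (huniq l hl c2 hu'.2.2.symm).symm
      exact dist_eq_three hT hl'.2.2.symm h12 hu'.2.2 hl'.2.1 (Ne.symm hu'.1) hlu
    unfold SimpleGraph.status
    rw [hsum (fun u => G.dist l u), hld1, hld2]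
    have hs1 : ∑ u ∈ L1, G.dist l u = 2 * (a - 1) := by
      rw [← Finset.sum_erase_add _ _ hl, SimpleGraph.dist_self,
        Finset.sum_congr rfl hsame, Finset.sum_const, smul_eq_mul,
        Finset.card_erase_of_mem hl, ← ha]
      omega
    have hs2 : ∑ u ∈ L2, G.dist l u = 3 * a := by
      rw [Finset.sum_congr rfl hother, Finset.sum_const, smul_eq_mul, hL2card]
      omega
    rw [hs1, hs2]
    omega
  have hstatL2 : ∀ l : V, l ∈ L2 → G.status l = 5 * a + 1 := by
    intro l hl
    have hl' := (hmemL2 l).mp hl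
    have hld2 : G.dist l c2 = 1 := SimpleGraph.dist_eq_one_iff_adj.mpr hl'.2.2.symm
    have hld1 : G.dist l c1 = 2 := dist_eq_two hT hl'.2.2.symm h12.symm hl'.1
    have hsame : ∀ u ∈ L2.erase l, G.dist l u = 2 := by
      intro u hu
      have hu' := (hmemL2 u).mp (Finset.mem_of_mem_erase hu)
      exact dist_eq_two hT hl'.2.2.symm hu'.2.2 (Ne.symm (Finset.mem_erase.mp hu).1)
    have hother : ∀ u ∈ L1, G.dist l u = 3 := by
      intro u hu
      have hu' := (hmemL1 u).mp hu
      have hlu : l ≠ u := by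
        intro h
        subst h
        exact hne (huniq2 l hl c1 hu'.2.2.symm)
      exact dist_eq_three hT hl'.2.2.symm h12.symm hu'.2.2 hl'.1 (Ne.symm hu'.2.1) hlu
    unfold SimpleGraph.status
    rw [hsum (fun u => G.dist l u), hld1, hld2]
    have hs1 : ∑ u ∈ L1, G.dist l u = 3 * a := by
      rw [Finset.sum_congr rfl hother, Finset.sum_const, smul_eq_mul, ← ha]
      omega
    have hs2 : ∑ u ∈ L2, G.dist l u = 2 * (a - 1) := by
      rw [← Finset.sum_erase_add _ _ hl, SimpleGraph.dist_self,
        Finset.sum_congr rfl hsame, Finset.sum_const, smul_eq_mul,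
        Finset.card_erase_of_mem hl, hL2card]
      omega
    rw [hs1, hs2]
    omega
  -- the image of the status function
  have himg : Finset.univ.image G.status = {3 * a + 1, 5 * a + 1} := by
    apply Finset.Subset.antisymm
    · intro s hs
      obtain ⟨v, -, rfl⟩ := Finset.mem_image.mp hs
      rcases eq_or_ne v c1 with rfl | h1
      · rw [hstatc1]; simp
      rcases eq_or_ne v c2 with rfl | h2
      · rw [hstatc2]; simp
      rcases (hpend v h1 h2).1 with h | h
      · rw [hstatL1 v ((hmemL1 v).mpr ⟨h1, h2, h.1⟩)]; simp
      · rw [hstatL2 v ((hmemL2 v).mpr ⟨h1, h2, h.1⟩)]; simp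
    · intro s hs
      rcases Finset.mem_insert.mp hs with rfl | hs
      · exact Finset.mem_image.mpr ⟨c1, Finset.mem_univ c1, hstatc1⟩
      · rw [Finset.mem_singleton] at hs
        subst hs
        obtain ⟨l, hl⟩ : L1.Nonempty := Finset.card_pos.mp (by omega)
        exact Finset.mem_image.mpr ⟨l, Finset.mem_univ l, hstatL1 l hl⟩
  unfold SimpleGraph.numStatusValues
  rw [himg, Finset.card_pair (by omega : 3 * a + 1 ≠ 5 * a + 1)]

end Helpers

/-- A finite tree `T` has exactly two distinct status values if and only if `T` is a star
`K_{1,t}` with `t ≥ 2` leaves or a balanced double star. -/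
theorem numStatusValues_eq_two_iff {V : Type*} [Fintype V]
    (G : SimpleGraph V) [DecidableRel G.Adj] (hT : G.IsTree) :
    G.numStatusValues = 2 ↔
      G.IsStarWithAtLeastTwoLeaves ∨ G.IsBalancedDoubleStar := by
  constructor
  · exact fun hk => forward G hT hk
  · rintro (h | h)
    · exact backward_star G hT h
    · exact backward_double G hT h
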